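/- Let P be a periodic orthogonal projection on ℋ = ℓ²(ℤ^d, ℂ^N), fix j ∈ {1,…,d}, and assume the commutator [P, X_j] admits a bounded periodic extension K. Let A be a bounded periodic operator on ℋ. Since X_j δ_0 e_s = 0, one has X_j (P δ_0 e_s) = −K δ_0 e_s ∈ ℋ, so v_s := −P K δ_0 e_s equals (P X_j P) δ_0 e_s. Then the trace per unit volume of the commutator [PAP, P X_j P] vanishes; explicitly, Σ_{s=1}^N ( ⟨ P A* P δ_0 e_s, v_s ⟩ − ⟨ v_s, P A P δ_0 e_s ⟩ ) = 0. -/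

import Mathlib

noncomputable section

/-- The lattice `ℤ^d`. -/
abbrev ZLat (d : ℕ) := Fin d → ℤ

/-- The Hilbert space `ℓ²(ℤ^d, ℂ^N)`. -/
abbrev Hilb (d N : ℕ) := lp (fun _ : ZLat d × Fin N => ℂ) 2

/-- The standard basis vector `δ_x e_s`. -/
def delta {d N : ℕ} (x : ZLat d) (s : Fin N) : Hilb d N := lp.single 2 (x, s) 1

/-- `ψ ∈ ℓ²(ℤ^d, ℂ^N)` is finitely supported. -/
def FinSupp {d N : ℕ} (ψ : Hilb d N) : Prop := (Function.support fun p => ψ p).Finite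

open scoped Classical in
/-- The position operator `X_j`, defined (with junk value `0` if the result fails to be
square-summable, which never happens for finitely supported `ψ`) by `(X_j ψ)(x) = x_j ψ(x)`. -/
def posOp {d N : ℕ} (j : Fin d) (ψ : Hilb d N) : Hilb d N :=
  if h : Memℓp (fun p : ZLat d × Fin N => (p.1 j : ℂ) * ψ p) 2 then ⟨_, h⟩ else 0

/-- A bounded operator `A` on `ℓ²(ℤ^d, ℂ^N)` is periodic, i.e. commutes with all lattice
translations `T_γ`; equivalently, its matrix elements are invariant under simultaneous
translation of both indices. -/
def IsPeriodic {d N : ℕ} (A : Hilb d N →L[ℂ] Hilb d N) : Prop :=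
  ∀ (γ x y : ZLat d) (s t : Fin N),
    (inner ℂ (delta (x + γ) s) (A (delta (y + γ) t)) : ℂ) = inner ℂ (delta x s) (A (delta y t))

/-- `K` is a bounded extension of the commutator `[A, X_j]`. -/
def IsCommExt {d N : ℕ} (A K : Hilb d N →L[ℂ] Hilb d N) (j : Fin d) : Prop :=
  ∀ φ ψ : Hilb d N, FinSupp φ → FinSupp ψ →
    (inner ℂ φ (K ψ) : ℂ) = inner ℂ φ (A (posOp j ψ)) - inner ℂ (posOp j φ) (A ψ)

/-- The trace per unit volume of a bounded periodic operator:
`τ(A) = ∑_{s=1}^N ⟨δ_0 e_s, A δ_0 e_s⟩`. -/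
def tau {d N : ℕ} (A : Hilb d N →L[ℂ] Hilb d N) : ℂ :=
  ∑ s : Fin N, inner ℂ (delta (0 : ZLat d) s) (A (delta 0 s))

/-- `H` has finite range `R`: matrix elements between sites at distance `> R` vanish. -/
def HasFiniteRange {d N : ℕ} (H : Hilb d N →L[ℂ] Hilb d N) (R : ℝ) : Prop :=
  ∀ (x y : ZLat d) (s t : Fin N), R < ‖x - y‖ →
    (inner ℂ (delta x s) (H (delta y t)) : ℂ) = 0

namespace Aux
variable {d N : ℕ}

def e (u : ZLat d × Fin N) : Hilb d N := delta u.1 u.2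

def mat (C : Hilb d N →L[ℂ] Hilb d N) (u v : ZLat d × Fin N) : ℂ := inner ℂ (e u) (C (e v))

lemma ap (ψ : Hilb d N) (u : ZLat d × Fin N) : (inner ℂ (e u) ψ : ℂ) = ψ u := by
  simp [e, delta, lp.inner_single_left, RCLike.inner_apply']

lemma mat_ap (C : Hilb d N →L[ℂ] Hilb d N) (u v : ZLat d × Fin N) :
    (C (e v)) u = mat C u v := (ap (C (e v)) u).symm

lemma summ (f g : Hilb d N) : Summable fun u => (starRingEnd ℂ) (f u) * g u := by
  simpa only [RCLike.inner_apply'] using lp.summable_inner (𝕜 := ℂ) f g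

lemma inner_tsum (f g : Hilb d N) :
    (inner ℂ f g : ℂ) = ∑' u, (starRingEnd ℂ) (f u) * g u := by
  rw [lp.inner_eq_tsum (𝕜 := ℂ) f g]
  exact tsum_congr fun u => by rw [RCLike.inner_apply']

lemma adj_comp (C : Hilb d N →L[ℂ] Hilb d N) (u v : ZLat d × Fin N) :
    (starRingEnd ℂ) ((ContinuousLinearMap.adjoint C (e u)) v) = mat C u v := by
  rw [← ap (ContinuousLinearMap.adjoint C (e u)) v, inner_conj_symm,
    ContinuousLinearMap.adjoint_inner_left]
  rfl

lemma comp_mat (C D : Hilb d N →L[ℂ] Hilb d N) (u w : ZLat d × Fin N) :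
    (inner ℂ (e u) (C (D (e w))) : ℂ) = ∑' v, mat C u v * mat D v w := by
  rw [← ContinuousLinearMap.adjoint_inner_left, inner_tsum]
  exact tsum_congr fun v => by rw [adj_comp, mat_ap]

lemma summ_comp (C D : Hilb d N →L[ℂ] Hilb d N) (u w : ZLat d × Fin N) :
    Summable fun v => mat C u v * mat D v w := by
  refine (summ (ContinuousLinearMap.adjoint C (e u)) (D (e w))).congr fun v => ?_
  rw [adj_comp, mat_ap]

lemma finSupp_delta (x : ZLat d) (s : Fin N) : FinSupp (delta x s) := by
  refine (Set.finite_singleton ((x, s) : ZLat d × Fin N)).subset ?_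
  intro p hp
  simp only [Function.mem_support] at hp
  by_contra h
  exact hp (lp.single_apply_ne 2 (x, s) 1 h)

lemma posOp_delta (j : Fin d) (x : ZLat d) (s : Fin N) :
    posOp j (delta x s) = ((x j : ℤ) : ℂ) • delta x s := by
  have hfun : (fun p : ZLat d × Fin N => (p.1 j : ℂ) * (delta x s) p)
      = ⇑(((x j : ℤ) : ℂ) • delta x s) := by
    funext p
    rw [lp.coeFn_smul, Pi.smul_apply, smul_eq_mul]
    rcases eq_or_ne p (x, s) with h | h
    · subst h; rfl
    · rw [show (delta x s) p = 0 from lp.single_apply_ne 2 (x, s) 1 h, mul_zero, mul_zero]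
  have hm : Memℓp (fun p : ZLat d × Fin N => (p.1 j : ℂ) * (delta x s) p) 2 := by
    rw [hfun]; exact lp.memℓp _
  simp only [posOp]
  rw [dif_pos hm]
  exact lp.ext hfun

section Main
variable {P K : Hilb d N →L[ℂ] Hilb d N} {j : Fin d}

lemma Psa (hPsa : IsSelfAdjoint P) (f g : Hilb d N) :
    (inner ℂ (P f) g : ℂ) = inner ℂ f (P g) := by
  rw [← ContinuousLinearMap.isSelfAdjoint_iff'.mp hPsa, ContinuousLinearMap.adjoint_inner_left,
    ContinuousLinearMap.isSelfAdjoint_iff'.mp hPsa]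

lemma Pidem (hPidem : P * P = P) (f : Hilb d N) : P (P f) = P f := by
  have h := ContinuousLinearMap.ext_iff.mp hPidem f
  rwa [ContinuousLinearMap.mul_apply] at h

lemma matP_conj (hPsa : IsSelfAdjoint P) (u v : ZLat d × Fin N) :
    (starRingEnd ℂ) (mat P u v) = mat P v u := by
  rw [mat, inner_conj_symm, Psa hPsa, mat]

lemma matK (hK : IsCommExt P K j) (u v : ZLat d × Fin N) :
    mat K u v = ((v.1 j : ℂ) - (u.1 j : ℂ)) * mat P u v := by
  have h := hK (e u) (e v) (finSupp_delta u.1 u.2) (finSupp_delta v.1 v.2)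
  rw [show posOp j (e v) = ((v.1 j : ℤ) : ℂ) • e v from posOp_delta j v.1 v.2,
    show posOp j (e u) = ((u.1 j : ℤ) : ℂ) • e u from posOp_delta j u.1 u.2] at h
  rw [map_smul, inner_smul_right, inner_smul_left, map_intCast] at h
  rw [mat, h, mat]
  ring

lemma matK_conj (hPsa : IsSelfAdjoint P) (hK : IsCommExt P K j) (u v : ZLat d × Fin N) :
    (starRingEnd ℂ) (mat K u v) = -(mat K v u) := by
  rw [matK hK, matK hK, map_mul, map_sub, map_intCast, map_intCast, matP_conj hPsa]
  ring

lemma PLP (hPsa : IsSelfAdjoint P) (hPidem : P * P = P) {L : Hilb d N →L[ℂ] Hilb d N}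
    (hL : ∀ u v : ZLat d × Fin N, mat L u v = ((v.1 j : ℂ) - (u.1 j : ℂ)) * mat P u v)
    (w : ZLat d × Fin N) : P (L (P (e w))) = 0 := by
  have key : ∀ v : ZLat d × Fin N, (L (P (e w))) v
      = -((P (L (e w))) v) + ((w.1 j : ℂ) - (v.1 j : ℂ)) * ((P (e w)) v) := by
    intro v
    have h1 : (L (P (e w))) v = ∑' z, mat L v z * mat P z w := by
      rw [← ap (L (P (e w))) v, comp_mat]
    have h2 : ∀ z : ZLat d × Fin N, mat L v z * mat P z w
        = -((starRingEnd ℂ) ((P (e v)) z) * ((L (e w)) z))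
          + ((w.1 j : ℂ) - (v.1 j : ℂ)) * ((starRingEnd ℂ) ((P (e v)) z) * ((P (e w)) z)) := by
      intro z
      simp only [mat_ap]
      rw [matP_conj hPsa, hL v z, hL z w]
      ring
    rw [h1, tsum_congr h2, Summable.tsum_add ((summ _ _).neg) (((summ _ _)).mul_left _), tsum_neg,
      tsum_mul_left, ← inner_tsum, ← inner_tsum, Psa hPsa, Psa hPsa, Pidem hPidem, ap, ap]
  have hcomp : ∀ u : ZLat d × Fin N, (P (L (P (e w)))) u = 0 := by
    intro u
    rw [← ap, ← Psa hPsa, inner_tsum]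
    have h3 : ∀ v : ZLat d × Fin N, (starRingEnd ℂ) ((P (e u)) v) * ((L (P (e w))) v)
        = -((starRingEnd ℂ) ((P (e u)) v) * ((P (L (e w))) v))
          + (starRingEnd ℂ) ((P (e u)) v) * ((L (e w)) v) := by
      intro v
      rw [key v, show ((w.1 j : ℂ) - (v.1 j : ℂ)) * ((P (e w)) v) = (L (e w)) v from by
        rw [mat_ap, mat_ap, hL]]
      ring
    rw [tsum_congr h3, Summable.tsum_add ((summ _ _).neg) (summ _ _), tsum_neg, ← inner_tsum,
      ← inner_tsum, Psa hPsa, Psa hPsa, Pidem hPidem]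
    ring
  refine lp.ext (funext fun u => ?_)
  rw [hcomp u, lp.coeFn_zero, Pi.zero_apply]

lemma per_comp {C D : Hilb d N →L[ℂ] Hilb d N} (hC : IsPeriodic C) (hD : IsPeriodic D) :
    IsPeriodic (C ∘L D) := by
  intro γ x y s t
  simp only [ContinuousLinearMap.comp_apply]
  calc (inner ℂ (delta (x + γ) s) (C (D (delta (y + γ) t))) : ℂ)
      = ∑' v : ZLat d × Fin N, mat C (x + γ, s) v * mat D v (y + γ, t) := comp_mat C D (x + γ, s) (y + γ, t)
    _ = ∑' v : ZLat d × Fin N,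
          mat C (x + γ, s) (v.1 + γ, v.2) * mat D (v.1 + γ, v.2) (y + γ, t) := by
        rw [← (Equiv.prodCongr (Equiv.addRight γ) (Equiv.refl (Fin N))).tsum_eq
          (fun v : ZLat d × Fin N => mat C (x + γ, s) v * mat D v (y + γ, t))]
        exact tsum_congr fun v => by obtain ⟨a, b⟩ := v; rfl
    _ = ∑' v : ZLat d × Fin N, mat C (x, s) v * mat D v (y, t) :=
        tsum_congr fun v => congrArg₂ (· * ·) (hC γ x v.1 s v.2) (hD γ v.1 y v.2 t)
    _ = (inner ℂ (delta x s) (C (D (delta y t))) : ℂ) := (comp_mat C D (x, s) (y, t)).symm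

def Hfun (C D : Hilb d N →L[ℂ] Hilb d N) (x : ZLat d) (s t : Fin N) : ℂ :=
  mat C (x, t) ((0 : ZLat d), s) * mat D ((0 : ZLat d), s) (x, t)

lemma cyc {C D : Hilb d N →L[ℂ] Hilb d N} (hC : IsPeriodic C) (hD : IsPeriodic D) :
    ∑ s : Fin N, (inner ℂ (delta (0 : ZLat d) s) (C (D (delta 0 s))) : ℂ)
      = ∑ s : Fin N, (inner ℂ (delta (0 : ZLat d) s) (D (C (delta 0 s))) : ℂ) := by
  have hL : ∀ s : Fin N, (inner ℂ (delta (0 : ZLat d) s) (C (D (delta 0 s))) : ℂ)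
      = ∑' u : ZLat d × Fin N, Hfun C D u.1 u.2 s := by
    intro s
    calc (inner ℂ (delta (0 : ZLat d) s) (C (D (delta 0 s))) : ℂ)
        = ∑' v : ZLat d × Fin N, mat C ((0 : ZLat d), s) v * mat D v ((0 : ZLat d), s) :=
          comp_mat C D ((0 : ZLat d), s) ((0 : ZLat d), s)
      _ = ∑' v : ZLat d × Fin N,
            mat C ((0 : ZLat d), s) (-v.1, v.2) * mat D (-v.1, v.2) ((0 : ZLat d), s) := by
          rw [← (Equiv.prodCongr (Equiv.neg (ZLat d)) (Equiv.refl (Fin N))).tsum_eq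
            (fun v : ZLat d × Fin N => mat C ((0 : ZLat d), s) v * mat D v ((0 : ZLat d), s))]
          exact tsum_congr fun v => by obtain ⟨a, b⟩ := v; rfl
      _ = ∑' u : ZLat d × Fin N, Hfun C D u.1 u.2 s := by
          refine tsum_congr fun v => ?_
          have h1 := hC v.1 0 (-v.1) s v.2
          have h2 := hD v.1 (-v.1) 0 v.2 s
          rw [zero_add, neg_add_cancel] at h1 h2
          exact congrArg₂ (· * ·) h1.symm h2.symm
  have hR : ∀ s : Fin N, (inner ℂ (delta (0 : ZLat d) s) (D (C (delta 0 s))) : ℂ)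
      = ∑' u : ZLat d × Fin N, Hfun C D u.1 s u.2 := by
    intro s
    calc (inner ℂ (delta (0 : ZLat d) s) (D (C (delta 0 s))) : ℂ)
        = ∑' v : ZLat d × Fin N, mat D ((0 : ZLat d), s) v * mat C v ((0 : ZLat d), s) :=
          comp_mat D C ((0 : ZLat d), s) ((0 : ZLat d), s)
      _ = ∑' u : ZLat d × Fin N, Hfun C D u.1 s u.2 := tsum_congr fun v => mul_comm _ _
  have hsum1 : ∀ s : Fin N, Summable (fun u : ZLat d × Fin N => Hfun C D u.1 s u.2) := by
    intro s
    exact (summ_comp D C ((0 : ZLat d), s) ((0 : ZLat d), s)).congr fun v => mul_comm _ _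
  have hsum2 : ∀ s : Fin N, Summable (fun u : ZLat d × Fin N => Hfun C D u.1 u.2 s) := by
    intro s
    have h0 := summ_comp C D ((0 : ZLat d), s) ((0 : ZLat d), s)
    have h1 := ((Equiv.prodCongr (Equiv.neg (ZLat d)) (Equiv.refl (Fin N))).summable_iff
      (f := fun v : ZLat d × Fin N =>
        mat C ((0 : ZLat d), s) v * mat D v ((0 : ZLat d), s))).mpr h0
    refine h1.congr fun v => ?_
    have h2 := hC v.1 0 (-v.1) s v.2
    have h3 := hD v.1 (-v.1) 0 v.2 s
    rw [zero_add, neg_add_cancel] at h2 h3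
    have h4 : (Function.comp (fun v : ZLat d × Fin N =>
        mat C ((0 : ZLat d), s) v * mat D v ((0 : ZLat d), s))
        (Equiv.prodCongr (Equiv.neg (ZLat d)) (Equiv.refl (Fin N)))) v
        = mat C ((0 : ZLat d), s) (-v.1, v.2) * mat D (-v.1, v.2) ((0 : ZLat d), s) := by
      obtain ⟨a, b⟩ := v; rfl
    rw [h4]
    exact congrArg₂ (· * ·) h2.symm h3.symm
  have hfib : ∀ s t : Fin N, Summable (fun x : ZLat d => Hfun C D x s t) := by
    intro s t
    refine (hsum1 s).comp_injective
      (i := fun x : ZLat d => ((x, t) : ZLat d × Fin N)) fun a b hab => ?_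
    simpa using congrArg Prod.fst hab
  calc ∑ s : Fin N, (inner ℂ (delta (0 : ZLat d) s) (C (D (delta 0 s))) : ℂ)
      = ∑ s : Fin N, ∑' u : ZLat d × Fin N, Hfun C D u.1 u.2 s :=
        Finset.sum_congr rfl fun s _ => hL s
    _ = ∑ s : Fin N, ∑' x : ZLat d, ∑ t : Fin N, Hfun C D x t s :=
        Finset.sum_congr rfl fun s _ => by
          rw [Summable.tsum_prod (hsum2 s)]
          exact tsum_congr fun x => tsum_fintype _
    _ = ∑' x : ZLat d, ∑ s : Fin N, ∑ t : Fin N, Hfun C D x t s :=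
        (Summable.tsum_finsetSum fun s _ => summable_sum fun t _ => hfib t s).symm
    _ = ∑' x : ZLat d, ∑ s : Fin N, ∑ t : Fin N, Hfun C D x s t :=
        tsum_congr fun x => Finset.sum_comm
    _ = ∑ s : Fin N, ∑' x : ZLat d, ∑ t : Fin N, Hfun C D x s t :=
        Summable.tsum_finsetSum fun s _ => summable_sum fun t _ => hfib s t
    _ = ∑ s : Fin N, ∑' u : ZLat d × Fin N, Hfun C D u.1 s u.2 :=
        Finset.sum_congr rfl fun s _ => by
          rw [Summable.tsum_prod (hsum1 s)]
          exact (tsum_congr fun x => (tsum_fintype _).symm)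
    _ = ∑ s : Fin N, (inner ℂ (delta (0 : ZLat d) s) (D (C (delta 0 s))) : ℂ) :=
        Finset.sum_congr rfl fun s _ => (hR s).symm

lemma Kflip (hPsa : IsSelfAdjoint P) (hK : IsCommExt P K j) (s : Fin N) (ξ : Hilb d N) :
    (inner ℂ (K (delta (0 : ZLat d) s)) ξ : ℂ)
      = -(inner ℂ (delta (0 : ZLat d) s) (K ξ) : ℂ) := by
  have h1 : (inner ℂ (K (delta (0 : ZLat d) s)) ξ : ℂ)
      = ∑' u, (starRingEnd ℂ) ((K (e ((0 : ZLat d), s))) u) * ξ u :=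
    inner_tsum (K (e ((0 : ZLat d), s))) ξ
  have h2 : (inner ℂ (delta (0 : ZLat d) s) (K ξ) : ℂ)
      = ∑' u, mat K ((0 : ZLat d), s) u * ξ u := by
    calc (inner ℂ (delta (0 : ZLat d) s) (K ξ) : ℂ)
        = inner ℂ (ContinuousLinearMap.adjoint K (e ((0 : ZLat d), s))) ξ :=
          (ContinuousLinearMap.adjoint_inner_left K ξ (e ((0 : ZLat d), s))).symm
      _ = ∑' u, (starRingEnd ℂ) ((ContinuousLinearMap.adjoint K (e ((0 : ZLat d), s))) u) * ξ u :=
          inner_tsum _ _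
      _ = ∑' u, mat K ((0 : ZLat d), s) u * ξ u := tsum_congr fun u => by rw [adj_comp]
  rw [h1, h2, ← tsum_neg]
  refine tsum_congr fun u => ?_
  rw [show (K (e ((0 : ZLat d), s))) u = mat K u ((0 : ZLat d), s) from mat_ap K u _,
    matK_conj hPsa hK]
  ring

lemma adjK_mat (hPsa : IsSelfAdjoint P) (hK : IsCommExt P K j) (u v : ZLat d × Fin N) :
    mat (-(ContinuousLinearMap.adjoint K)) u v = ((v.1 j : ℂ) - (u.1 j : ℂ)) * mat P u v := by
  have h := matK_conj hPsa hK v u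
  calc mat (-(ContinuousLinearMap.adjoint K)) u v
      = -(inner ℂ (e u) ((ContinuousLinearMap.adjoint K) (e v)) : ℂ) := by
        rw [mat, ContinuousLinearMap.neg_apply, inner_neg_right]
    _ = -((starRingEnd ℂ) (mat K v u)) := by
        rw [ContinuousLinearMap.adjoint_inner_right]
        rw [show (inner ℂ (K (e u)) (e v) : ℂ) = (starRingEnd ℂ) (mat K v u) from
          (inner_conj_symm (K (e u)) (e v)).symm]
    _ = mat K u v := by rw [h, neg_neg]
    _ = ((v.1 j : ℂ) - (u.1 j : ℂ)) * mat P u v := matK hK u v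

end Main



end Aux

open Aux

/-- Let `P` be a periodic orthogonal projection on `ℓ²(ℤ^d, ℂ^N)` such
that `[P, X_j]` admits a bounded periodic extension `K`, and let `A` be bounded and
periodic.  With `v_s := -P K δ_0 e_s` (which equals `(P X_j P) δ_0 e_s`), the trace per
unit volume of `[PAP, P X_j P]` vanishes:
`∑_s ( ⟨P A* P δ_0 e_s, v_s⟩ - ⟨v_s, P A P δ_0 e_s⟩ ) = 0`. -/
theorem stmt_3 {d N : ℕ} (hd : 0 < d) (hN : 0 < N)
    (P : Hilb d N →L[ℂ] Hilb d N) (hPper : IsPeriodic P)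
    (hPsa : IsSelfAdjoint P) (hPidem : P * P = P)
    (j : Fin d) (K : Hilb d N →L[ℂ] Hilb d N) (hKper : IsPeriodic K)
    (hK : IsCommExt P K j)
    (A : Hilb d N →L[ℂ] Hilb d N) (hAper : IsPeriodic A) :
    ∑ s : Fin N,
      ((inner ℂ (P ((ContinuousLinearMap.adjoint A) (P (delta (0 : ZLat d) s))))
          (-(P (K (delta (0 : ZLat d) s)))) : ℂ) -
        (inner ℂ (-(P (K (delta (0 : ZLat d) s)))) (P (A (P (delta (0 : ZLat d) s)))) : ℂ)) = 0 := by

  have hAPK : IsPeriodic (A ∘L (P ∘L K)) := per_comp hAper (per_comp hPper hKper)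
  have hKPA : IsPeriodic (K ∘L (P ∘L A)) := per_comp hKper (per_comp hPper hAper)
  have step : ∀ s : Fin N,
      (inner ℂ (P ((ContinuousLinearMap.adjoint A) (P (delta (0 : ZLat d) s))))
          (-(P (K (delta (0 : ZLat d) s)))) : ℂ)
        - (inner ℂ (-(P (K (delta (0 : ZLat d) s)))) (P (A (P (delta (0 : ZLat d) s)))) : ℂ)
      = -(inner ℂ (delta (0 : ZLat d) s) (P (A (P (K (delta 0 s))))) : ℂ)
        - (inner ℂ (delta (0 : ZLat d) s) (K (P (A (P (delta 0 s))))) : ℂ) := by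
    intro s
    rw [inner_neg_right, inner_neg_left]
    have t1 : (inner ℂ (P ((ContinuousLinearMap.adjoint A) (P (delta (0 : ZLat d) s))))
          (P (K (delta (0 : ZLat d) s))) : ℂ)
        = inner ℂ (delta (0 : ZLat d) s) (P (A (P (K (delta 0 s))))) := by
      rw [Psa hPsa, Pidem hPidem, ContinuousLinearMap.adjoint_inner_left, Psa hPsa]
    have t2 : (inner ℂ (P (K (delta (0 : ZLat d) s))) (P (A (P (delta (0 : ZLat d) s)))) : ℂ)
        = -(inner ℂ (delta (0 : ZLat d) s) (K (P (A (P (delta 0 s))))) : ℂ) := by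
      rw [Psa hPsa, Pidem hPidem]
      exact Kflip hPsa hK s (P (A (P (delta (0 : ZLat d) s))))
    rw [t1, t2]
    ring
  have hT1 : ∑ s : Fin N,
      (inner ℂ (delta (0 : ZLat d) s) (P (A (P (K (delta 0 s))))) : ℂ) = 0 := by
    have h := cyc (C := P) (D := A ∘L (P ∘L K)) hPper hAPK
    calc ∑ s : Fin N, (inner ℂ (delta (0 : ZLat d) s) (P (A (P (K (delta 0 s))))) : ℂ)
        = ∑ s : Fin N, (inner ℂ (delta (0 : ZLat d) s) (A (P (K (P (delta 0 s))))) : ℂ) := h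
      _ = 0 := by
          refine Finset.sum_eq_zero fun s _ => ?_
          rw [show P (K (P (delta (0 : ZLat d) s))) = 0 from
            PLP hPsa hPidem (matK hK) ((0 : ZLat d), s), map_zero, inner_zero_right]
  have hT2 : ∑ s : Fin N,
      (inner ℂ (delta (0 : ZLat d) s) (K (P (A (P (delta 0 s)))))) = (0 : ℂ) := by
    have h := cyc (C := K ∘L (P ∘L A)) (D := P) hKPA hPper
    calc ∑ s : Fin N, (inner ℂ (delta (0 : ZLat d) s) (K (P (A (P (delta 0 s))))) : ℂ)
        = ∑ s : Fin N, (inner ℂ (delta (0 : ZLat d) s) (P (K (P (A (delta 0 s)))))) := h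
      _ = 0 := by
          refine Finset.sum_eq_zero fun s _ => ?_
          have hz := PLP hPsa hPidem (adjK_mat hPsa hK) ((0 : ZLat d), s)
          rw [ContinuousLinearMap.neg_apply, map_neg, neg_eq_zero] at hz
          have hz2 : P ((ContinuousLinearMap.adjoint K) (P (delta (0 : ZLat d) s))) = 0 := hz
          rw [← Psa hPsa, ← ContinuousLinearMap.adjoint_inner_left, ← Psa hPsa, hz2,
            inner_zero_left]
  calc ∑ s : Fin N,
      ((inner ℂ (P ((ContinuousLinearMap.adjoint A) (P (delta (0 : ZLat d) s))))
          (-(P (K (delta (0 : ZLat d) s)))) : ℂ) -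
        (inner ℂ (-(P (K (delta (0 : ZLat d) s)))) (P (A (P (delta (0 : ZLat d) s)))) : ℂ))
      = ∑ s : Fin N,
        (-(inner ℂ (delta (0 : ZLat d) s) (P (A (P (K (delta 0 s))))) : ℂ)
          - (inner ℂ (delta (0 : ZLat d) s) (K (P (A (P (delta 0 s))))) : ℂ)) :=
        Finset.sum_congr rfl fun s _ => step s
    _ = -(∑ s : Fin N, (inner ℂ (delta (0 : ZLat d) s) (P (A (P (K (delta 0 s))))) : ℂ))
          - ∑ s : Fin N, (inner ℂ (delta (0 : ZLat d) s) (K (P (A (P (delta 0 s))))) : ℂ) := by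
        rw [Finset.sum_sub_distrib, Finset.sum_neg_distrib]
    _ = 0 := by rw [hT1, hT2]; ring
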